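/- arXiv:1903.03185 — 3 statements merged into one kernel-verified Lean document; each statement's English description precedes it below -/
import Mathlib

section
/- Let u₁(t) = tanh(t/√2) and W(s) = (1-s²)²/4. There exists μ₁ > 0 such that for every ω ∈ H¹(ℝ) with ∫_ℝ ω(t)·u₁'(t) dt = 0, one has ∫_ℝ (ω'(t))² + W''(u₁(t))·ω(t)² dt ≥ μ₁ · ∫_ℝ ω(t)² dt. -/
open MeasureTheory Real Filter Set

namespace SG11
noncomputable def q : ℝ := Real.sqrt 2
noncomputable def th (t : ℝ) : ℝ := Real.tanh (t / q)
noncomputable def ph (t : ℝ) : ℝ := 1 - th t ^ 2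
noncomputable def cc (t : ℝ) : ℝ := q * th t
noncomputable def ps (t : ℝ) : ℝ := Real.cosh (t / q) ^ 2

lemma hq : 0 < q := Real.sqrt_pos.2 two_pos
lemma hq2 : q ^ 2 = 2 := Real.sq_sqrt (by norm_num)

lemma th_eq (t : ℝ) : th t = Real.sinh (t / q) / Real.cosh (t / q) :=
  Real.tanh_eq_sinh_div_cosh _

lemma ch_pos (t : ℝ) : 0 < Real.cosh (t / q) := Real.cosh_pos _

lemma ps_pos (t : ℝ) : 0 < ps t := by
  simp only [ps]; positivity

lemma ps_ph (t : ℝ) : ps t * ph t = 1 := by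
  simp only [ps, ph, th_eq, div_pow]
  rw [mul_sub, mul_one, mul_div_cancel₀ _ (by positivity : Real.cosh (t/q)^2 ≠ 0)]
  exact Real.cosh_sq_sub_sinh_sq _

lemma ph_pos (t : ℝ) : 0 < ph t := by
  have h := ps_ph t
  have hps := ps_pos t
  by_contra hph
  push_neg at hph
  nlinarith

lemma th_sq_lt_one (t : ℝ) : th t ^ 2 < 1 := by
  have := ph_pos t; simp only [ph] at this; linarith

lemma th_abs_le (t : ℝ) : |th t| ≤ 1 := by
  have := th_sq_lt_one t
  nlinarith [abs_nonneg (th t), sq_abs (th t)]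

lemma ph_le_one (t : ℝ) : ph t ≤ 1 := by
  have := sq_nonneg (th t); simp only [ph]; linarith

lemma hasDerivAt_th (t : ℝ) : HasDerivAt th (ph t / q) t := by
  have hs : HasDerivAt (fun t : ℝ => Real.sinh (t / q)) (Real.cosh (t / q) / q) t := by
    simpa [div_eq_mul_inv, Function.comp_def] using
      (Real.hasDerivAt_sinh (t / q)).comp t ((hasDerivAt_id t).div_const q)
  have hc : HasDerivAt (fun t : ℝ => Real.cosh (t / q)) (Real.sinh (t / q) / q) t := by
    simpa [div_eq_mul_inv, Function.comp_def] using
      (Real.hasDerivAt_cosh (t / q)).comp t ((hasDerivAt_id t).div_const q)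
  have h := hs.div hc (ch_pos t).ne'
  have heq : (Real.cosh (t / q) / q * Real.cosh (t / q) -
      Real.sinh (t / q) * (Real.sinh (t / q) / q)) / Real.cosh (t / q) ^ 2 = ph t / q := by
    have h1 := Real.cosh_sq_sub_sinh_sq (t / q)
    have hc0 := (ch_pos t).ne'
    have hq0 := hq.ne'
    simp only [ph, th_eq]
    field_simp
  have h2 : th = fun t : ℝ => Real.sinh (t / q) / Real.cosh (t / q) := funext th_eq
  rw [h2, ← heq]
  exact h

lemma hasDerivAt_cc (t : ℝ) : HasDerivAt cc (ph t) t := by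
  have := (hasDerivAt_th t).const_mul q
  have hne := hq.ne'
  show HasDerivAt (fun y => q * th y) (ph t) t
  simpa [mul_div_assoc, mul_div_cancel₀ _ hne] using this

lemma hasDerivAt_ps (t : ℝ) : HasDerivAt ps (cc t * ps t) t := by
  have hc : HasDerivAt (fun t : ℝ => Real.cosh (t / q)) (Real.sinh (t / q) / q) t := by
    simpa [div_eq_mul_inv, Function.comp_def] using
      (Real.hasDerivAt_cosh (t / q)).comp t ((hasDerivAt_id t).div_const q)
  have h := hc.pow 2
  have heq : (2 : ℕ) * Real.cosh (t / q) ^ (2 - 1) * (Real.sinh (t / q) / q) =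
      cc t * ps t := by
    have h2 : (q : ℝ) * q = 2 := by nlinarith [hq2]
    have hq0 := hq.ne'
    have hc0 := (ch_pos t).ne'
    simp only [cc, ps, th_eq]
    push_cast
    field_simp
    linear_combination (-Real.sinh (t/q)) * h2
  rw [← heq]; exact h

lemma continuous_th : Continuous th :=
  continuous_iff_continuousAt.2 fun t => (hasDerivAt_th t).continuousAt
lemma continuous_ph : Continuous ph := by
  have : ph = fun t => 1 - th t ^ 2 := rfl
  rw [this]; exact continuous_const.sub (continuous_th.pow 2)
lemma continuous_cc : Continuous cc := continuous_const.mul continuous_th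
lemma continuous_ps : Continuous ps := by
  have : ps = fun t => Real.cosh (t / q) ^ 2 := rfl
  rw [this]; exact (Real.continuous_cosh.comp (continuous_id.div_const q)).pow 2

lemma cc_abs_le (t : ℝ) : |cc t| ≤ q := by
  have h := th_abs_le t
  have : |cc t| = q * |th t| := by rw [cc, abs_mul, abs_of_pos hq]
  nlinarith [hq]

open Topology

lemma th_formula (t : ℝ) : th t = 1 - 2 / (Real.exp (2 * (t / q)) + 1) := by
  have hE : Real.exp (2 * (t / q)) = Real.exp (t / q) * Real.exp (t / q) := by
    rw [two_mul, Real.exp_add]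
  have hE0 : (0:ℝ) < Real.exp (t / q) := Real.exp_pos _
  have hden : Real.exp (2 * (t / q)) + 1 ≠ 0 := by positivity
  have hc0 := (ch_pos t).ne'
  rw [th_eq, Real.sinh_eq, Real.cosh_eq, Real.exp_neg]
  have hc1 : Real.exp (t / q) + (Real.exp (t / q))⁻¹ ≠ 0 := by positivity
  have hEE : Real.exp (2 * (t / q)) = Real.exp (2 * t / q) := by rw [mul_div_assoc]
  field_simp
  have hEE2 : Real.exp (t * 2 / q) = Real.exp (2 * t / q) := by rw [mul_comm]
  linear_combination (-2) * hE + 2 * hEE - 2 * hEE2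

lemma tendsto_th_atTop : Tendsto th atTop (𝓝 1) := by
  have hexp : Tendsto (fun t : ℝ => Real.exp (2 * (t / q))) atTop atTop := by
    apply Real.tendsto_exp_atTop.comp
    apply Tendsto.const_mul_atTop two_pos
    exact tendsto_id.atTop_div_const hq
  have h2 : Tendsto (fun t : ℝ => 2 / (Real.exp (2 * (t / q)) + 1)) atTop (𝓝 0) := by
    simp only [div_eq_mul_inv]
    rw [show (0:ℝ) = 2 * 0 by norm_num]
    exact (Tendsto.inv_tendsto_atTop (tendsto_atTop_add_const_right _ 1 hexp)).const_mul 2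
  have h3 := (tendsto_const_nhds (α := ℝ) (f := atTop (α := ℝ)) (x := (1:ℝ))).sub h2
  rw [sub_zero] at h3
  exact h3.congr fun t => (th_formula t).symm

lemma tendsto_th_atBot : Tendsto th atBot (𝓝 (-1)) := by
  have hexp : Tendsto (fun t : ℝ => Real.exp (2 * (t / q))) atBot (𝓝 0) := by
    apply Real.tendsto_exp_atBot.comp
    apply Tendsto.const_mul_atBot two_pos
    exact tendsto_id.atBot_div_const hq
  have hc : ContinuousAt (fun y : ℝ => 1 - 2 / (y + 1)) 0 := by
    have h0 : ((0:ℝ) + 1) ≠ 0 := by norm_num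
    exact (continuousAt_const.sub (continuousAt_const.div
      (continuousAt_id.add continuousAt_const) h0))
  have h3 := hc.tendsto.comp hexp
  simp only [Function.comp_def] at h3
  norm_num at h3
  exact h3.congr fun t => (th_formula t).symm

lemma tendsto_cc_atTop : Tendsto cc atTop (𝓝 q) := by
  have := tendsto_th_atTop.const_mul q
  rw [mul_one] at this; exact this

lemma tendsto_cc_atBot : Tendsto cc atBot (𝓝 (-q)) := by
  have := tendsto_th_atBot.const_mul q
  rw [mul_neg_one] at this; exact this

lemma integrableOn_ph_Ioi (a : ℝ) : IntegrableOn ph (Ioi a) volume :=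
  integrableOn_Ioi_deriv_of_nonneg' (fun x _ => hasDerivAt_cc x)
    (fun x _ => (ph_pos x).le) tendsto_cc_atTop

lemma integral_ph_Ioi (a : ℝ) : ∫ s in Ioi a, ph s = q - cc a :=
  integral_Ioi_of_hasDerivAt_of_nonneg' (fun x _ => hasDerivAt_cc x)
    (fun x _ => (ph_pos x).le) tendsto_cc_atTop

lemma ph_even (t : ℝ) : ph (-t) = ph t := by
  simp [ph, th, Real.tanh_neg, neg_div]

lemma integrableOn_ph_Iic (a : ℝ) : IntegrableOn ph (Iic a) volume := by
  have h := integrableOn_ph_Ioi (-a)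
  have h2 : IntegrableOn (ph ∘ Neg.neg) (Neg.neg ⁻¹' Ioi (-a)) volume :=
    (MeasurePreserving.integrableOn_comp_preimage (Measure.measurePreserving_neg _)
      (Homeomorph.neg ℝ).measurableEmbedding).2 h
  have hset : (Neg.neg ⁻¹' Ioi (-a) : Set ℝ) = Iio a := by
    ext x; simp
  have hfun : (ph ∘ Neg.neg) = ph := funext fun t => ph_even t
  rw [hset, hfun] at h2
  rwa [integrableOn_Iic_iff_integrableOn_Iio]

lemma integral_ph_Iic (a : ℝ) : ∫ s in Iic a, ph s = cc a + q := by
  have h : ∫ s in Iic a, ph s = cc a - (-q) :=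
    integral_Iic_of_hasDerivAt_of_tendsto' (fun x _ => hasDerivAt_cc x)
      (integrableOn_ph_Iic a) tendsto_cc_atBot
  rw [h]; ring

lemma integrable_ph : Integrable ph := by
  rw [← integrableOn_univ, ← Iic_union_Ioi (a := (0:ℝ))]
  exact (integrableOn_ph_Iic 0).union (integrableOn_ph_Ioi 0)

lemma ps_bound_top {t : ℝ} (ht : 0 ≤ t) : ps t * (q - cc t) ≤ q := by
  have hkey : ps t * (q - cc t) =
      q * (Real.cosh (t/q) * Real.exp (-(t/q))) := by
    have hc0 := (ch_pos t).ne'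
    simp only [ps, cc, th_eq]
    have hee : Real.exp (-(t / q)) = Real.exp (-t / q) := by rw [neg_div]
    field_simp
    linear_combination q * Real.cosh_sub_sinh (t/q)
  rw [hkey, Real.cosh_eq]
  have hx : 0 ≤ t / q := div_nonneg ht hq.le
  have he1 : Real.exp (-(t / q)) ≤ 1 := Real.exp_le_one_iff.2 (by linarith)
  have hmul : Real.exp (t / q) * Real.exp (-(t / q)) = 1 := by
    rw [← Real.exp_add]; simp
  have he2 : (0:ℝ) < Real.exp (-(t / q)) := Real.exp_pos _
  have he3 : (0:ℝ) < Real.exp (t / q) := Real.exp_pos _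
  have he4 : Real.exp (-(t / q)) * Real.exp (-(t / q)) ≤ 1 := by nlinarith
  nlinarith [hq]

lemma ps_bound_bot {t : ℝ} (ht : t ≤ 0) : ps t * (q + cc t) ≤ q := by
  have hkey : ps t * (q + cc t) =
      q * (Real.cosh (t/q) * Real.exp (t/q)) := by
    have hc0 := (ch_pos t).ne'
    simp only [ps, cc, th_eq]
    field_simp
    linear_combination q * Real.cosh_add_sinh (t/q)
  rw [hkey, Real.cosh_eq]
  have hx : t / q ≤ 0 := div_nonpos_of_nonpos_of_nonneg ht hq.le
  have he1 : Real.exp (t / q) ≤ 1 := Real.exp_le_one_iff.2 hx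
  have hmul : Real.exp (t / q) * Real.exp (-(t / q)) = 1 := by
    rw [← Real.exp_add]; simp
  have he2 : (0:ℝ) < Real.exp (-(t / q)) := Real.exp_pos _
  have he3 : (0:ℝ) < Real.exp (t / q) := Real.exp_pos _
  have he4 : Real.exp (t / q) * Real.exp (t / q) ≤ 1 := by nlinarith
  nlinarith [hq]

lemma exists_bound_of_tendsto {f : ℝ → ℝ} (hc : Continuous f)
    (h1 : Tendsto f atTop (𝓝 0)) (h2 : Tendsto f atBot (𝓝 0)) :
    ∃ C : ℝ, 0 ≤ C ∧ ∀ t, |f t| ≤ C := by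
  have e1 : ∀ᶠ t in atTop, |f t| < 1 := by
    have := (tendsto_zero_iff_abs_tendsto_zero f).1 h1
    exact this.eventually_lt_const one_pos
  have e2 : ∀ᶠ t in atBot, |f t| < 1 := by
    have := (tendsto_zero_iff_abs_tendsto_zero f).1 h2
    exact this.eventually_lt_const one_pos
  obtain ⟨a, ha⟩ := eventually_atTop.1 e1
  obtain ⟨b, hb⟩ := eventually_atBot.1 e2
  obtain ⟨C, hC⟩ := (isCompact_Icc (a := min b a) (b := max b a)).exists_bound_of_continuousOn
    hc.continuousOn
  refine ⟨max C 1, le_trans zero_le_one (le_max_right _ _), fun t => ?_⟩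
  rcases le_or_gt a t with h | h
  · exact le_trans (ha t h).le (le_max_right _ _)
  rcases le_or_gt t b with h' | h'
  · exact le_trans (hb t h').le (le_max_right _ _)
  · have : t ∈ Icc (min b a) (max b a) :=
      ⟨le_trans (min_le_left _ _) h'.le, le_trans h.le (le_max_right _ _)⟩
    exact le_trans (hC t this) (le_max_left _ _)

lemma memL2_mul {f g : ℝ → ℝ} (hf : MemLp f 2 (volume : Measure ℝ))
    (hg : MemLp g 2 (volume : Measure ℝ)) : Integrable (fun t => f t * g t) := by
  have h1 : Integrable (fun t => (f t + g t) ^ 2) := by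
    have := (hf.add hg).integrable_sq
    exact this.congr (ae_of_all _ fun t => by simp [Pi.add_apply])
  have h2 := ((h1.sub hf.integrable_sq).sub hg.integrable_sq).mul_const (1/2 : ℝ)
  exact h2.congr (ae_of_all _ fun t => by simp only [Pi.sub_apply]; ring)

section Main

variable {ω : ℝ → ℝ}

/-- tail function -/
noncomputable def FF (ω : ℝ → ℝ) (t : ℝ) : ℝ := ∫ s in Ioi t, ω s * ph s

/-- candidate dual function -/
noncomputable def vv (ω : ℝ → ℝ) (t : ℝ) : ℝ := ps t * FF ω t

lemma w_sq_tendsto (hdiff : Differentiable ℝ ω) (hω : MemLp ω 2 (volume : Measure ℝ))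
    (hω' : MemLp (deriv ω) 2 (volume : Measure ℝ)) :
    Tendsto (fun t => ω t ^ 2) atTop (𝓝 0) ∧ Tendsto (fun t => ω t ^ 2) atBot (𝓝 0) := by
  have iww' := memL2_mul hω hω'
  have hder : ∀ t : ℝ, HasDerivAt (fun s => ω s ^ 2) (2 * ω t * deriv ω t) t := fun t => by
    show HasDerivAt (ω ^ 2) _ t; simpa using ((hdiff t).hasDerivAt.pow 2)
  have ig' : Integrable (fun t => 2 * ω t * deriv ω t) := by
    simpa [mul_assoc] using iww'.const_mul 2
  have iw2 := hω.integrable_sq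
  constructor
  · exact tendsto_zero_of_hasDerivAt_of_integrableOn_Ioi (a := 0)
      (fun x _ => hder x) ig'.integrableOn iw2.integrableOn
  · exact tendsto_zero_of_hasDerivAt_of_integrableOn_Iic (a := 0)
      (fun x _ => hder x) ig'.integrableOn iw2.integrableOn

lemma w_tendsto (hdiff : Differentiable ℝ ω) (hω : MemLp ω 2 (volume : Measure ℝ))
    (hω' : MemLp (deriv ω) 2 (volume : Measure ℝ)) :
    Tendsto ω atTop (𝓝 0) ∧ Tendsto ω atBot (𝓝 0) := by
  obtain ⟨h1, h2⟩ := w_sq_tendsto hdiff hω hω'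
  have habs : ∀ l : Filter ℝ, Tendsto (fun t => ω t ^ 2) l (𝓝 0) →
      Tendsto ω l (𝓝 0) := by
    intro l h
    rw [tendsto_zero_iff_abs_tendsto_zero]
    have := (Real.continuous_sqrt.tendsto' 0 0 Real.sqrt_zero).comp h
    simpa [Function.comp_def, Real.sqrt_sq_eq_abs] using this
  exact ⟨habs _ h1, habs _ h2⟩

lemma hf_integrable (hcw : Continuous ω) {M : ℝ} (hM : ∀ t, |ω t| ≤ M) :
    Integrable (fun t => ω t * ph t) :=
  integrable_ph.bdd_mul (c := M) hcw.aestronglyMeasurable (ae_of_all _ fun t => by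
    simpa [Real.norm_eq_abs] using hM t)

lemma FF_eq (hi : Integrable (fun t => ω t * ph t)) (t : ℝ) :
    FF ω t = FF ω 0 - ∫ s in (0:ℝ)..t, ω s * ph s := by
  rcases le_or_gt 0 t with h | h
  · have hsplit : (∫ s in Ioc 0 t, ω s * ph s) + ∫ s in Ioi t, ω s * ph s = FF ω 0 := by
      rw [FF, ← setIntegral_union (Ioc_disjoint_Ioi le_rfl) measurableSet_Ioi
        hi.integrableOn hi.integrableOn, Ioc_union_Ioi_eq_Ioi h]
    rw [intervalIntegral.integral_of_le h]
    simp only [FF] at *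
    linarith
  · have hsplit : (∫ s in Ioc t 0, ω s * ph s) + ∫ s in Ioi 0, ω s * ph s = FF ω t := by
      rw [FF, ← setIntegral_union (Ioc_disjoint_Ioi le_rfl) measurableSet_Ioi
        hi.integrableOn hi.integrableOn, Ioc_union_Ioi_eq_Ioi h.le]
    rw [intervalIntegral.integral_symm, intervalIntegral.integral_of_le h.le]
    simp only [FF] at *
    linarith

lemma FF_hasDeriv (hcw : Continuous ω) (hi : Integrable (fun t => ω t * ph t)) (t : ℝ) :
    HasDerivAt (FF ω) (-(ω t * ph t)) t := by
  have hcont : Continuous (fun t => ω t * ph t) := hcw.mul continuous_ph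
  have h1 : HasDerivAt (fun u => ∫ s in (0:ℝ)..u, ω s * ph s) (ω t * ph t) t :=
    intervalIntegral.integral_hasDerivAt_right hi.intervalIntegrable
      (hcont.stronglyMeasurableAtFilter _ _) hcont.continuousAt
  have heq : FF ω = fun u => FF ω 0 - ∫ s in (0:ℝ)..u, ω s * ph s := funext (FF_eq hi)
  rw [heq]
  exact h1.const_sub _

lemma vv_hasDeriv (hcw : Continuous ω) (hi : Integrable (fun t => ω t * ph t)) (t : ℝ) :
    HasDerivAt (vv ω) (cc t * vv ω t - ω t) t := by
  have h := (hasDerivAt_ps t).mul (FF_hasDeriv hcw hi t)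
  have heq : cc t * ps t * FF ω t + ps t * -(ω t * ph t) = cc t * (ps t * FF ω t) - ω t := by
    linear_combination (-(ω t)) * ps_ph t
  have hgoal : HasDerivAt (fun y => ps y * FF ω y) (cc t * (ps t * FF ω t) - ω t) t :=
    heq ▸ h
  exact hgoal

lemma vv_continuous (hcw : Continuous ω) (hi : Integrable (fun t => ω t * ph t)) :
    Continuous (vv ω) :=
  continuous_iff_continuousAt.2 fun t => (vv_hasDeriv hcw hi t).continuousAt

lemma cc_le_q (t : ℝ) : cc t ≤ q := by
  have h := (abs_le.1 (th_abs_le t)).2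
  rw [cc]
  nlinarith [hq]

lemma neg_q_le_cc (t : ℝ) : -q ≤ cc t := by
  have h := (abs_le.1 (th_abs_le t)).1
  rw [cc]
  nlinarith [hq]

lemma vv_tendsto_top (hi : Integrable (fun t => ω t * ph t))
    (hw_top : Tendsto ω atTop (𝓝 0)) : Tendsto (vv ω) atTop (𝓝 0) := by
  rw [NormedAddCommGroup.tendsto_nhds_zero]
  intro ε hε
  have hδ : 0 < ε / (2 * q) := div_pos hε (by nlinarith [hq])
  have hw := (tendsto_zero_iff_abs_tendsto_zero ω).1 hw_top
  obtain ⟨T, hT⟩ := eventually_atTop.1 (hw.eventually_lt_const hδ)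
  filter_upwards [eventually_ge_atTop (max T 0)] with t ht
  have htT : T ≤ t := le_trans (le_max_left _ _) ht
  have ht0 : 0 ≤ t := le_trans (le_max_right _ _) ht
  set δ := ε / (2 * q) with hδdef
  have hFF : |FF ω t| ≤ δ * (q - cc t) := by
    have h1 : |FF ω t| ≤ ∫ s in Ioi t, |ω s * ph s| := by
      simp only [FF]
      simpa only [Real.norm_eq_abs] using
        norm_integral_le_integral_norm (μ := volume.restrict (Ioi t)) (fun s => ω s * ph s)
    have h2 : (∫ s in Ioi t, |ω s * ph s|) ≤ ∫ s in Ioi t, δ * ph s := by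
      apply setIntegral_mono_on hi.abs.integrableOn
        ((integrableOn_ph_Ioi t).const_mul δ) measurableSet_Ioi
      intro s hs
      have hsT : T ≤ s := le_trans htT (le_of_lt hs)
      have hTs := hT s hsT
      simp only [Function.comp_apply] at hTs
      have hp := (ph_pos s).le
      rw [abs_mul, abs_of_nonneg hp]
      exact mul_le_mul_of_nonneg_right hTs.le hp
    have h3 : (∫ s in Ioi t, δ * ph s) = δ * (q - cc t) := by
      rw [integral_const_mul, integral_ph_Ioi]
    linarith
  have hvb : |vv ω t| ≤ δ * (ps t * (q - cc t)) := by
    rw [vv, abs_mul, abs_of_pos (ps_pos t)]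
    have := mul_le_mul_of_nonneg_left hFF (ps_pos t).le
    nlinarith [ps_pos t]
  have hfinal : |vv ω t| ≤ δ * q := by
    have hb := ps_bound_top ht0
    nlinarith [hδ]
  rw [Real.norm_eq_abs]
  have hq0 := hq.ne'
  have : δ * q = ε / 2 := by rw [hδdef]; field_simp
  calc |vv ω t| ≤ δ * q := hfinal
    _ = ε / 2 := this
    _ < ε := by linarith

lemma FF_neg_rep (hi : Integrable (fun t => ω t * ph t))
    (hzero : ∫ t, ω t * ph t = 0) (t : ℝ) :
    FF ω t = -∫ s in Iic t, ω s * ph s := by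
  have h := intervalIntegral.integral_Iic_add_Ioi (b := t) hi.integrableOn hi.integrableOn
  rw [hzero] at h
  simp only [FF]
  linarith

lemma vv_tendsto_bot (hi : Integrable (fun t => ω t * ph t))
    (hzero : ∫ t, ω t * ph t = 0)
    (hw_bot : Tendsto ω atBot (𝓝 0)) : Tendsto (vv ω) atBot (𝓝 0) := by
  rw [NormedAddCommGroup.tendsto_nhds_zero]
  intro ε hε
  have hδ : 0 < ε / (2 * q) := div_pos hε (by nlinarith [hq])
  have hw := (tendsto_zero_iff_abs_tendsto_zero ω).1 hw_bot
  obtain ⟨T, hT⟩ := eventually_atBot.1 (hw.eventually_lt_const hδ)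
  filter_upwards [eventually_le_atBot (min T 0)] with t ht
  have htT : t ≤ T := le_trans ht (min_le_left _ _)
  have ht0 : t ≤ 0 := le_trans ht (min_le_right _ _)
  set δ := ε / (2 * q) with hδdef
  have hFF : |FF ω t| ≤ δ * (cc t + q) := by
    rw [FF_neg_rep hi hzero, abs_neg]
    have h1 : |∫ s in Iic t, ω s * ph s| ≤ ∫ s in Iic t, |ω s * ph s| := by
      simpa only [Real.norm_eq_abs] using
        norm_integral_le_integral_norm (μ := volume.restrict (Iic t)) (fun s => ω s * ph s)
    have h2 : (∫ s in Iic t, |ω s * ph s|) ≤ ∫ s in Iic t, δ * ph s := by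
      apply setIntegral_mono_on hi.abs.integrableOn
        ((integrableOn_ph_Iic t).const_mul δ) measurableSet_Iic
      intro s hs
      have hsT : s ≤ T := le_trans hs htT
      have hTs := hT s hsT
      simp only [Function.comp_apply] at hTs
      have hp := (ph_pos s).le
      rw [abs_mul, abs_of_nonneg hp]
      exact mul_le_mul_of_nonneg_right hTs.le hp
    have h3 : (∫ s in Iic t, δ * ph s) = δ * (cc t + q) := by
      rw [integral_const_mul, integral_ph_Iic]
    linarith
  have hvb : |vv ω t| ≤ δ * (ps t * (cc t + q)) := by
    rw [vv, abs_mul, abs_of_pos (ps_pos t)]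
    have := mul_le_mul_of_nonneg_left hFF (ps_pos t).le
    nlinarith [ps_pos t]
  have hfinal : |vv ω t| ≤ δ * q := by
    have hb := ps_bound_bot ht0
    have : ps t * (cc t + q) = ps t * (q + cc t) := by ring
    nlinarith [hδ]
  rw [Real.norm_eq_abs]
  have hq0 := hq.ne'
  have heq2 : δ * q = ε / 2 := by rw [hδdef]; field_simp
  calc |vv ω t| ≤ δ * q := hfinal
    _ = ε / 2 := heq2
    _ < ε := by linarith

lemma key (hdiff : Differentiable ℝ ω) (hω : MemLp ω 2 (volume : Measure ℝ))
    (hω' : MemLp (deriv ω) 2 (volume : Measure ℝ))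
    (hzero : ∫ t, ω t * ph t = 0) :
    (∫ t, ω t ^ 2) ≤ ∫ t, (deriv ω t ^ 2 + (3 * th t ^ 2 - 1) * ω t ^ 2) := by
  have hcw : Continuous ω := hdiff.continuous
  obtain ⟨hwt, hwb⟩ := w_tendsto hdiff hω hω'
  obtain ⟨hst, hsb⟩ := w_sq_tendsto hdiff hω hω'
  obtain ⟨M, hM0, hM⟩ := exists_bound_of_tendsto hcw hwt hwb
  have hi : Integrable (fun t => ω t * ph t) := hf_integrable hcw hM
  have iw2 := hω.integrable_sq
  have iw'2 := hω'.integrable_sq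
  have iww' := memL2_mul hω hω'
  -- integrability of (ω' + cc ω)²
  have icw2 : Integrable (fun t => cc t ^ 2 * ω t ^ 2) := by
    apply iw2.bdd_mul (c := q ^ 2) (continuous_cc.pow 2).aestronglyMeasurable
    refine ae_of_all _ fun t => ?_
    rw [Real.norm_eq_abs, abs_of_nonneg (sq_nonneg _)]
    show cc t ^ 2 ≤ q ^ 2
    nlinarith [cc_abs_le t, abs_nonneg (cc t), sq_abs (cc t)]
  have iccww' : Integrable (fun t => 2 * cc t * (ω t * deriv ω t)) := by
    apply iww'.bdd_mul (c := 2 * q) (continuous_const.mul continuous_cc).aestronglyMeasurable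
    refine ae_of_all _ fun t => ?_
    show ‖2 * cc t‖ ≤ 2 * q
    rw [Real.norm_eq_abs, abs_mul, abs_two]
    nlinarith [cc_abs_le t, abs_nonneg (cc t)]
  have iA2 : Integrable (fun t => (deriv ω t + cc t * ω t) ^ 2) := by
    have h := (iw'2.add iccww').add icw2
    exact h.congr (ae_of_all _ fun t => by simp only [Pi.add_apply]; ring)
  have iV : Integrable (fun t => (3 * th t ^ 2 - 1) * ω t ^ 2) := by
    apply iw2.bdd_mul (c := 4) ((continuous_const.mul (continuous_th.pow 2)).sub
      continuous_const).aestronglyMeasurable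
    refine ae_of_all _ fun t => ?_
    show ‖3 * th t ^ 2 - 1‖ ≤ 4
    rw [Real.norm_eq_abs]
    rw [abs_le]
    constructor <;> nlinarith [th_sq_lt_one t, sq_nonneg (th t)]
  have iT : Integrable (fun t => deriv ω t ^ 2 + (3 * th t ^ 2 - 1) * ω t ^ 2) :=
    iw'2.add iV
  -- Step A : ∫ (ω' + cc ω)² = ∫ (ω'² + (3 th² - 1) ω²)
  have hg1 : ∀ t : ℝ, HasDerivAt (fun t => cc t * ω t ^ 2)
      (ph t * ω t ^ 2 + cc t * (2 * ω t * deriv ω t)) t := by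
    intro t
    have hw2 : HasDerivAt (fun s => ω s ^ 2) (2 * ω t * deriv ω t) t := by
      show HasDerivAt (ω ^ 2) _ t; simpa using ((hdiff t).hasDerivAt.pow 2)
    exact (hasDerivAt_cc t).mul hw2
  have ig1' : Integrable (fun t => ph t * ω t ^ 2 + cc t * (2 * ω t * deriv ω t)) := by
    apply Integrable.add
    · apply iw2.bdd_mul (c := 1) continuous_ph.aestronglyMeasurable
      exact ae_of_all _ fun t => by
        rw [Real.norm_eq_abs, abs_of_pos (ph_pos t)]; exact ph_le_one t
    · have h := (iww'.const_mul 2).bdd_mul (c := q) continuous_cc.aestronglyMeasurable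
        (ae_of_all _ fun t => by rw [Real.norm_eq_abs]; exact cc_abs_le t)
      exact h.congr (ae_of_all _ fun t => by simp only [Pi.add_apply]; ring)
  have hbnd : ∀ R : ℝ, ‖cc R * ω R ^ 2‖ ≤ q * ω R ^ 2 := by
    intro R
    rw [Real.norm_eq_abs, abs_mul, abs_of_nonneg (sq_nonneg (ω R))]
    exact mul_le_mul_of_nonneg_right (cc_abs_le R) (sq_nonneg _)
  have hbd_top : Tendsto (fun R => cc R * ω R ^ 2) atTop (𝓝 0) := by
    apply squeeze_zero_norm hbnd
    simpa using hst.const_mul q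
  have hbd_bot : Tendsto (fun R => cc R * ω R ^ 2) atBot (𝓝 0) := by
    apply squeeze_zero_norm hbnd
    simpa using hsb.const_mul q
  have hint_g1 : ∫ t, (ph t * ω t ^ 2 + cc t * (2 * ω t * deriv ω t)) = 0 := by
    have hlim1 : Tendsto (fun R : ℝ => ∫ t in -R..R,
        (ph t * ω t ^ 2 + cc t * (2 * ω t * deriv ω t))) atTop
        (𝓝 (∫ t, (ph t * ω t ^ 2 + cc t * (2 * ω t * deriv ω t)))) :=
      intervalIntegral_tendsto_integral ig1' tendsto_neg_atTop_atBot tendsto_id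
    have hFTC1 : ∀ R : ℝ, (∫ t in -R..R, (ph t * ω t ^ 2 + cc t * (2 * ω t * deriv ω t)))
        = cc R * ω R ^ 2 - cc (-R) * ω (-R) ^ 2 := fun R =>
      intervalIntegral.integral_eq_sub_of_hasDerivAt (fun x _ => hg1 x)
        ig1'.intervalIntegrable
    have hlim2 : Tendsto (fun R : ℝ => cc R * ω R ^ 2 - cc (-R) * ω (-R) ^ 2) atTop (𝓝 0) := by
      have h2 := hbd_bot.comp tendsto_neg_atTop_atBot
      have := hbd_top.sub h2
      simpa using this
    exact tendsto_nhds_unique (hlim1.congr fun R => hFTC1 R) hlim2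
  have hKT : (∫ t, (deriv ω t + cc t * ω t) ^ 2)
      = ∫ t, (deriv ω t ^ 2 + (3 * th t ^ 2 - 1) * ω t ^ 2) := by
    have hpt : (fun t => (deriv ω t + cc t * ω t) ^ 2) = fun t =>
        (deriv ω t ^ 2 + (3 * th t ^ 2 - 1) * ω t ^ 2) +
        (ph t * ω t ^ 2 + cc t * (2 * ω t * deriv ω t)) := by
      funext t
      have h2 : cc t ^ 2 = 2 * th t ^ 2 := by rw [cc]; nlinarith [hq2]
      have hph : ph t = 1 - th t ^ 2 := rfl
      linear_combination (ω t ^ 2) * h2 - (ω t ^ 2) * hph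
    rw [hpt, integral_add iT ig1', hint_g1, add_zero]
  -- Step B : ∫ ω² ≤ ∫ (ω' + cc ω)²
  have hvd := vv_hasDeriv hcw hi
  have hvc := vv_continuous hcw hi
  have hvt := vv_tendsto_top (ω := ω) hi hwt
  have hvb := vv_tendsto_bot (ω := ω) hi hzero hwb
  have iloc : ∀ a b : ℝ, IntervalIntegrable (deriv ω) volume a b := by
    intro a b
    rw [intervalIntegrable_iff]
    apply Integrable.mono' (g := fun t => (1 + deriv ω t ^ 2) / 2)
    · apply Integrable.div_const
      exact (integrableOn_const measure_Ioc_lt_top.ne).add iw'2.integrableOn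
    · exact hω'.1.restrict
    · refine ae_of_all _ fun t => ?_
      rw [Real.norm_eq_abs]
      nlinarith [sq_nonneg (|deriv ω t| - 1), sq_abs (deriv ω t), abs_nonneg (deriv ω t)]
  have iAloc : ∀ a b : ℝ, IntervalIntegrable (fun t => deriv ω t + cc t * ω t) volume a b :=
    fun a b => (iloc a b).add ((continuous_cc.mul hcw).intervalIntegrable a b)
  have ivAloc : ∀ a b : ℝ, IntervalIntegrable
      (fun t => vv ω t * (deriv ω t + cc t * ω t)) volume a b :=
    fun a b => (iAloc a b).continuousOn_mul hvc.continuousOn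
  have hg3 : ∀ t : ℝ, HasDerivAt (fun t => vv ω t * ω t)
      (vv ω t * (deriv ω t + cc t * ω t) - ω t ^ 2) t := by
    intro t
    have h := (hvd t).mul (hdiff t).hasDerivAt
    have heq : (cc t * vv ω t - ω t) * ω t + vv ω t * deriv ω t =
        vv ω t * (deriv ω t + cc t * ω t) - ω t ^ 2 := by ring
    exact heq ▸ h
  have hP1 : ∀ R : ℝ, (∫ t in -R..R, (vv ω t * (deriv ω t + cc t * ω t) - ω t ^ 2))
      = vv ω R * ω R - vv ω (-R) * ω (-R) := fun R =>
    intervalIntegral.integral_eq_sub_of_hasDerivAt (fun x _ => hg3 x)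
      ((ivAloc _ _).sub ((hcw.pow 2).intervalIntegrable _ _))
  have hg4 : ∀ t : ℝ, HasDerivAt (fun t => cc t * vv ω t ^ 2)
      (ph t * vv ω t ^ 2 + cc t * (2 * vv ω t * (cc t * vv ω t - ω t))) t := by
    intro t
    have hv2 : HasDerivAt (fun s => vv ω s ^ 2) (2 * vv ω t * (cc t * vv ω t - ω t)) t := by
      show HasDerivAt (vv ω ^ 2) _ t; simpa using ((hvd t).pow 2)
    exact (hasDerivAt_cc t).mul hv2
  have hg4cont : Continuous (fun t =>
      ph t * vv ω t ^ 2 + cc t * (2 * vv ω t * (cc t * vv ω t - ω t))) := by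
    apply Continuous.add
    · exact continuous_ph.mul (hvc.pow 2)
    · exact continuous_cc.mul ((continuous_const.mul hvc).mul ((continuous_cc.mul hvc).sub hcw))
  have hP2 : ∀ R : ℝ, (∫ t in -R..R,
      (ph t * vv ω t ^ 2 + cc t * (2 * vv ω t * (cc t * vv ω t - ω t))))
      = cc R * vv ω R ^ 2 - cc (-R) * vv ω (-R) ^ 2 := fun R =>
    intervalIntegral.integral_eq_sub_of_hasDerivAt (fun x _ => hg4 x)
      (hg4cont.intervalIntegrable _ _)
  -- pointwise : vv² ≤ ω² + g4'
  have hpt2 : ∀ t : ℝ, vv ω t ^ 2 ≤ ω t ^ 2 +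
      (ph t * vv ω t ^ 2 + cc t * (2 * vv ω t * (cc t * vv ω t - ω t))) := by
    intro t
    have h2 : cc t ^ 2 + ph t = 1 + th t ^ 2 := by
      have hph : ph t = 1 - th t ^ 2 := rfl
      rw [cc, hph]; nlinarith [hq2]
    nlinarith [sq_nonneg (cc t * vv ω t - ω t), sq_nonneg (th t * vv ω t), sq_nonneg (vv ω t)]
  -- combine on intervals
  set S := ∫ t, ω t ^ 2 with hS
  set K := ∫ t, (deriv ω t + cc t * ω t) ^ 2 with hK
  have hJK : ∀ᶠ R in atTop, (∫ t in -R..R, ω t ^ 2) ≤ K +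
      ((cc R * vv ω R ^ 2 - cc (-R) * vv ω (-R) ^ 2)
        - 2 * (vv ω R * ω R - vv ω (-R) * ω (-R))) := by
    filter_upwards [eventually_ge_atTop (0:ℝ)] with R hR
    have hab : (-R : ℝ) ≤ R := by linarith
    have hIw2 : IntervalIntegrable (fun t => ω t ^ 2) volume (-R) R :=
      (hcw.pow 2).intervalIntegrable _ _
    have hIvv2 : IntervalIntegrable (fun t => vv ω t ^ 2) volume (-R) R :=
      (hvc.pow 2).intervalIntegrable _ _
    have hIA2 : IntervalIntegrable (fun t => (deriv ω t + cc t * ω t) ^ 2) volume (-R) R :=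
      iA2.intervalIntegrable
    -- (1) J = ∫ vvA - b3
    have h1 : (∫ t in -R..R, vv ω t * (deriv ω t + cc t * ω t))
        - (∫ t in -R..R, ω t ^ 2) = vv ω R * ω R - vv ω (-R) * ω (-R) := by
      rw [← intervalIntegral.integral_sub (ivAloc _ _) hIw2]
      exact hP1 R
    -- (2) ∫ vvA ≤ (∫ vv² + ∫ A²)/2
    have h2 : (∫ t in -R..R, vv ω t * (deriv ω t + cc t * ω t))
        ≤ ((∫ t in -R..R, vv ω t ^ 2) + ∫ t in -R..R, (deriv ω t + cc t * ω t) ^ 2) / 2 := by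
      have hmono := intervalIntegral.integral_mono_on (μ := volume) hab (ivAloc (-R) R)
        (((hIvv2.add hIA2).div_const 2))
        (fun x _ => by nlinarith [sq_nonneg (vv ω x - (deriv ω x + cc x * ω x))])
      calc (∫ t in -R..R, vv ω t * (deriv ω t + cc t * ω t))
          ≤ ∫ t in -R..R, ((vv ω t ^ 2 + (deriv ω t + cc t * ω t) ^ 2) / 2) := hmono
        _ = ((∫ t in -R..R, vv ω t ^ 2) + ∫ t in -R..R, (deriv ω t + cc t * ω t) ^ 2) / 2 := by
            rw [intervalIntegral.integral_div, intervalIntegral.integral_add hIvv2 hIA2]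
    -- (3) ∫ vv² ≤ J + b4
    have h3 : (∫ t in -R..R, vv ω t ^ 2) ≤ (∫ t in -R..R, ω t ^ 2)
        + (cc R * vv ω R ^ 2 - cc (-R) * vv ω (-R) ^ 2) := by
      have hmono := intervalIntegral.integral_mono_on (μ := volume) hab hIvv2
        (hIw2.add (hg4cont.intervalIntegrable _ _)) (fun x _ => hpt2 x)
      calc (∫ t in -R..R, vv ω t ^ 2)
          ≤ ∫ t in -R..R, (ω t ^ 2 +
            (ph t * vv ω t ^ 2 + cc t * (2 * vv ω t * (cc t * vv ω t - ω t)))) := hmono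
        _ = (∫ t in -R..R, ω t ^ 2) + (cc R * vv ω R ^ 2 - cc (-R) * vv ω (-R) ^ 2) := by
            rw [intervalIntegral.integral_add hIw2 (hg4cont.intervalIntegrable _ _), hP2 R]
    -- (4) ∫ A² ≤ K
    have h4 : (∫ t in -R..R, (deriv ω t + cc t * ω t) ^ 2) ≤ K := by
      rw [intervalIntegral.integral_of_le hab, hK]
      exact setIntegral_le_integral iA2 (ae_of_all _ fun t => sq_nonneg _)
    linarith
  have hJlim : Tendsto (fun R : ℝ => ∫ t in -R..R, ω t ^ 2) atTop (𝓝 S) :=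
    intervalIntegral_tendsto_integral iw2 tendsto_neg_atTop_atBot tendsto_id
  have hRHSlim : Tendsto (fun R : ℝ => K +
      ((cc R * vv ω R ^ 2 - cc (-R) * vv ω (-R) ^ 2)
        - 2 * (vv ω R * ω R - vv ω (-R) * ω (-R)))) atTop (𝓝 K) := by
    have hbnd2 : ∀ R : ℝ, ‖cc R * vv ω R ^ 2‖ ≤ q * vv ω R ^ 2 := by
      intro R
      rw [Real.norm_eq_abs, abs_mul, abs_of_nonneg (sq_nonneg (vv ω R))]
      exact mul_le_mul_of_nonneg_right (cc_abs_le R) (sq_nonneg _)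
    have hccvv2 : Tendsto (fun R : ℝ => cc R * vv ω R ^ 2) atTop (𝓝 0) := by
      apply squeeze_zero_norm hbnd2
      have := (hvt.mul hvt).const_mul q
      simpa [← pow_two] using this
    have hccvv2' : Tendsto (fun R : ℝ => cc (-R) * vv ω (-R) ^ 2) atTop (𝓝 0) := by
      have hbot : Tendsto (fun R : ℝ => cc R * vv ω R ^ 2) atBot (𝓝 0) := by
        apply squeeze_zero_norm hbnd2
        have := (hvb.mul hvb).const_mul q
        simpa [← pow_two] using this
      exact hbot.comp tendsto_neg_atTop_atBot
    have hvw : Tendsto (fun R : ℝ => vv ω R * ω R) atTop (𝓝 0) := by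
      have := hvt.mul hwt; simpa using this
    have hvw' : Tendsto (fun R : ℝ => vv ω (-R) * ω (-R)) atTop (𝓝 0) := by
      have := (hvb.mul hwb).comp tendsto_neg_atTop_atBot
      simpa [Function.comp_def] using this
    have := ((hccvv2.sub hccvv2').sub ((hvw.sub hvw').const_mul 2)).const_add K
    simpa using this
  have hSK : S ≤ K := le_of_tendsto_of_tendsto hJlim hRHSlim hJK
  exact hSK.trans (le_of_eq hKT)

end Main
end SG11


/-- Spectral gap: there is `μ₁ > 0` such that for every `ω ∈ H¹(ℝ)` orthogonal to `u₁'`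
in `L²(ℝ)`, `∫ (ω')² + W''(u₁)·ω² ≥ μ₁ ∫ ω²`, where `u₁(t) = tanh(t/√2)` and
`W''(s) = 3s² - 1`. -/
theorem stmt_11 (u₁ : ℝ → ℝ) (hu : ∀ t, u₁ t = Real.tanh (t / Real.sqrt 2)) :
    ∃ μ₁ > 0, ∀ ω : ℝ → ℝ, Differentiable ℝ ω →
      MemLp ω 2 (volume : Measure ℝ) → MemLp (deriv ω) 2 (volume : Measure ℝ) →
      (∫ t : ℝ, ω t * deriv u₁ t) = 0 →
      μ₁ * ∫ t : ℝ, (ω t) ^ 2 ≤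
        ∫ t : ℝ, ((deriv ω t) ^ 2 + (3 * (u₁ t) ^ 2 - 1) * (ω t) ^ 2) := by
  refine ⟨1, one_pos, fun ω hdiff hω hω' horth0 => ?_⟩
  have hu₁ : u₁ = SG11.th := funext fun t => hu t
  rw [hu₁] at horth0 ⊢
  have hderiv : deriv SG11.th = fun t => SG11.ph t / SG11.q :=
    funext fun t => (SG11.hasDerivAt_th t).deriv
  rw [hderiv] at horth0
  have h1 : (fun t : ℝ => ω t * (SG11.ph t / SG11.q)) =
      fun t : ℝ => (ω t * SG11.ph t) / SG11.q := funext fun t => by ring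
  rw [h1, MeasureTheory.integral_div] at horth0
  have hzero : ∫ t : ℝ, ω t * SG11.ph t = 0 := by
    rcases div_eq_zero_iff.1 horth0 with h | h
    · exact h
    · exact absurd h SG11.hq.ne'
  have := SG11.key hdiff hω hω' hzero
  linarith
end

section
/- Let u₁(t) = tanh(t/√2) and suppose ω ∈ L^∞(ℝ) solves -ω'' + W''(u₁)·ω = 0 on ℝ, where W(s) = (1-s²)²/4. Then ω is a scalar multiple of u₁'. -/
open Real

noncomputable def Tf (t : ℝ) : ℝ := Real.tanh (t / Real.sqrt 2)
noncomputable def Pf (t : ℝ) : ℝ := (1 - Tf t ^ 2) / Real.sqrt 2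
noncomputable def Qf (t : ℝ) : ℝ := -(Tf t) * (1 - Tf t ^ 2)

lemma sqrt2_pos : (0:ℝ) < Real.sqrt 2 := Real.sqrt_pos.2 (by norm_num)
lemma sqrt2_sq : Real.sqrt 2 * Real.sqrt 2 = 2 := Real.mul_self_sqrt (by norm_num)
lemma one_le_sqrt2 : (1:ℝ) ≤ Real.sqrt 2 := by
  nlinarith [sqrt2_sq, sqrt2_pos]

lemma tanh_hasDerivAt (x : ℝ) : HasDerivAt Real.tanh (1 - Real.tanh x ^ 2) x := by
  have h : HasDerivAt (fun y => Real.sinh y / Real.cosh y)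
      ((Real.cosh x * Real.cosh x - Real.sinh x * Real.sinh x) / Real.cosh x ^ 2) x := by
    exact (Real.hasDerivAt_sinh x).div (Real.hasDerivAt_cosh x) (Real.cosh_pos x).ne'
  have he : Real.tanh = fun y => Real.sinh y / Real.cosh y := funext Real.tanh_eq_sinh_div_cosh
  rw [he]
  convert h using 1
  have hc := (Real.cosh_pos x).ne'
  have hid : Real.cosh x ^ 2 - Real.sinh x ^ 2 = 1 := Real.cosh_sq_sub_sinh_sq x
  simp only
  field_simp

lemma hT (t : ℝ) : HasDerivAt Tf (Pf t) t := by
  have h1 : HasDerivAt (fun s : ℝ => s / Real.sqrt 2) (1 / Real.sqrt 2) t := by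
    simpa using (hasDerivAt_id t).div_const (Real.sqrt 2)
  have := (tanh_hasDerivAt (t / Real.sqrt 2)).comp t h1
  rw [show Tf = Real.tanh ∘ fun s => s / Real.sqrt 2 from rfl]
  refine this.congr_deriv ?_
  simp only [Pf, Tf]; ring

lemma hP (t : ℝ) : HasDerivAt Pf (Qf t) t := by
  have h : HasDerivAt (fun s => (1 - Tf s ^ 2) / Real.sqrt 2)
      ((-(2 * Tf t ^ 1 * Pf t)) / Real.sqrt 2) t := by
    exact (((hT t).pow 2).const_sub 1).div_const _
  refine h.congr_deriv ?_
  simp only [Pf, Qf, pow_one]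
  field_simp
  rw [Real.sq_sqrt (by norm_num : (0:ℝ) ≤ 2)]
  nlinarith [sqrt2_sq, sq_nonneg (Tf t)]

lemma hQ (t : ℝ) : HasDerivAt Qf ((3 * Tf t ^ 2 - 1) * Pf t) t := by
  have he : Qf = fun s => Tf s ^ 3 - Tf s := by
    funext s; simp only [Qf]; ring
  rw [he]
  have h : HasDerivAt (fun s => Tf s ^ 3 - Tf s) (3 * Tf t ^ 2 * Pf t - Pf t) t := by
    refine (((hT t).pow 3).sub (hT t)).congr_deriv ?_; norm_num
  convert h using 1; ring

lemma T_sq_lt_one (t : ℝ) : Tf t ^ 2 < 1 := by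
  have hc := Real.cosh_pos (t / Real.sqrt 2)
  have hid := Real.cosh_sq_sub_sinh_sq (t / Real.sqrt 2)
  simp only [Tf, Real.tanh_eq_sinh_div_cosh, div_pow]
  rw [div_lt_one (by positivity)]
  nlinarith

lemma P_pos (t : ℝ) : 0 < Pf t := div_pos (by linarith [T_sq_lt_one t]) sqrt2_pos

lemma P_eq (t : ℝ) : Pf t = 1 / (Real.sqrt 2 * Real.cosh (t / Real.sqrt 2) ^ 2) := by
  have hc := (Real.cosh_pos (t / Real.sqrt 2)).ne'
  have hid := Real.cosh_sq_sub_sinh_sq (t / Real.sqrt 2)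
  simp only [Pf, Tf, Real.tanh_eq_sinh_div_cosh, div_pow]
  field_simp
  nlinarith [sqrt2_sq]

lemma P_le_one (t : ℝ) : Pf t ≤ 1 := by
  have := T_sq_lt_one t
  have h1 : Pf t ≤ 1 / Real.sqrt 2 := by
    unfold Pf; gcongr
    nlinarith [sq_nonneg (Tf t)]
  calc Pf t ≤ 1 / Real.sqrt 2 := h1
    _ ≤ 1 := by rw [div_le_one sqrt2_pos]; exact one_le_sqrt2

lemma cosh_ge_half_exp (x : ℝ) : Real.exp x / 2 ≤ Real.cosh x := by
  rw [Real.cosh_eq]; linarith [Real.exp_pos (-x)]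

lemma cosh_le_exp (x : ℝ) (hx : 0 ≤ x) : Real.cosh x ≤ Real.exp x := by
  rw [Real.cosh_eq]
  have : Real.exp (-x) ≤ Real.exp x := Real.exp_le_exp.2 (by linarith)
  linarith

lemma P_sq_le (t : ℝ) : Pf t ^ 2 ≤ 8 * Real.exp (-(4 * (t / Real.sqrt 2))) := by
  set x := t / Real.sqrt 2
  have h1 : Real.exp x / 2 ≤ Real.cosh x := cosh_ge_half_exp x
  have h2 : 0 < Real.exp x := Real.exp_pos x
  have h3 : 0 < Real.cosh x := Real.cosh_pos x
  have hP : Pf t = 1 / (Real.sqrt 2 * Real.cosh x ^ 2) := P_eq t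
  have h4 : Pf t ≤ 1 / (Real.sqrt 2 * (Real.exp x / 2) ^ 2) := by
    rw [hP]; gcongr
  have h5 : (0:ℝ) < Pf t := P_pos t
  have h6 : 1 / (Real.sqrt 2 * (Real.exp x / 2) ^ 2) = 4 / (Real.sqrt 2 * Real.exp x ^ 2) := by
    field_simp; ring
  have h7 : Pf t ^ 2 ≤ (4 / (Real.sqrt 2 * Real.exp x ^ 2)) ^ 2 := by
    apply pow_le_pow_left₀ h5.le (h4.trans_eq h6)
  refine h7.trans ?_
  rw [div_pow]
  rw [div_le_iff₀ (by positivity)]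
  have he : Real.exp (-(4 * x)) * Real.exp x ^ 2 * Real.exp x ^ 2 = 1 := by
    simp only [sq, ← Real.exp_add]
    ring_nf
    exact Real.exp_zero
  have : (Real.sqrt 2 * Real.exp x ^ 2) ^ 2 = 2 * (Real.exp x ^2)^2 := by
    rw [mul_pow]; rw [sq, sqrt2_sq]
  rw [this]
  nlinarith [sq_nonneg (Real.exp x ^ 2), he]

lemma P_ge (t : ℝ) (ht : 0 ≤ t) :
    Real.exp (-(2 * (t / Real.sqrt 2))) / Real.sqrt 2 ≤ Pf t := by
  set x := t / Real.sqrt 2 with hx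
  have hx0 : 0 ≤ x := by positivity
  have h1 : Real.cosh x ≤ Real.exp x := cosh_le_exp x hx0
  have h3 : 0 < Real.cosh x := Real.cosh_pos x
  have hxx : Real.exp x ^ 2 = Real.exp (2 * x) := by rw [sq, ← Real.exp_add]; ring_nf
  have h2 : Real.cosh x ^ 2 ≤ Real.exp (2 * x) := by
    rw [← hxx]; nlinarith
  have key : Real.exp (-(2 * x)) / Real.sqrt 2 ≤ 1 / (Real.sqrt 2 * Real.cosh x ^ 2) := by
    rw [Real.exp_neg, div_le_div_iff₀ (by positivity) (by positivity), one_mul]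
    calc (Real.exp (2*x))⁻¹ * (Real.sqrt 2 * Real.cosh x ^ 2)
        ≤ (Real.exp (2*x))⁻¹ * (Real.sqrt 2 * Real.exp (2*x)) := by gcongr
      _ = Real.sqrt 2 := by field_simp
  rw [P_eq t, ← hx]; exact key

lemma key (ω : ℝ → ℝ) (hd : Differentiable ℝ ω) (C : ℝ) (hbdd : ∀ t, |ω t| ≤ C)
    (c : ℝ) (hc : 0 < c) (hg : ∀ t, deriv ω t * Pf t - ω t * Qf t = c) : False := by
  set h : ℝ → ℝ := fun t => ω t / Pf t with hh_def
  have hh : ∀ t, HasDerivAt h (c / Pf t ^ 2) t := by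
    intro t
    have := (hd t).hasDerivAt.div (hP t) (P_pos t).ne'
    refine this.congr_deriv ?_
    rw [← hg t]
  set G : ℝ → ℝ := fun t => c * (Real.sqrt 2 / 32) * Real.exp (4 * (t / Real.sqrt 2)) with hG_def
  have hG : ∀ t, HasDerivAt G (c / 8 * Real.exp (4 * (t / Real.sqrt 2))) t := by
    intro t
    have h1 : HasDerivAt (fun s : ℝ => 4 * (s / Real.sqrt 2)) (4 * (1 / Real.sqrt 2)) t := by
      simpa using ((hasDerivAt_id t).div_const (Real.sqrt 2)).const_mul 4
    have h2 := (Real.hasDerivAt_exp (4 * (t / Real.sqrt 2))).comp t h1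
    have h3 := h2.const_mul (c * (Real.sqrt 2 / 32))
    refine h3.congr_deriv ?_
    have := sqrt2_sq
    field_simp
    ring_nf
  set H : ℝ → ℝ := fun t => h t - G t with hH_def
  have hH : ∀ t, HasDerivAt H (c / Pf t ^ 2 - c / 8 * Real.exp (4 * (t / Real.sqrt 2))) t :=
    fun t => (hh t).sub (hG t)
  have hH0 : ∀ t, 0 ≤ c / Pf t ^ 2 - c / 8 * Real.exp (4 * (t / Real.sqrt 2)) := by
    intro t
    have hsq := P_sq_le t
    have hp2 : 0 < Pf t ^ 2 := pow_pos (P_pos t) 2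
    have h1 : c / (8 * Real.exp (-(4 * (t / Real.sqrt 2)))) ≤ c / Pf t ^ 2 := by
      gcongr
    have h2 : c / (8 * Real.exp (-(4 * (t / Real.sqrt 2)))) =
        c / 8 * Real.exp (4 * (t / Real.sqrt 2)) := by
      rw [Real.exp_neg]
      field_simp
    linarith
  have hmono : Monotone H :=
    monotone_of_deriv_nonneg (fun t => (hH t).differentiableAt)
      (fun t => by rw [(hH t).deriv]; exact hH0 t)
  -- growth of h on [0, ∞)
  have hgrow : ∀ t, 0 ≤ t →
      h 0 + c * (Real.sqrt 2 / 32) * (Real.exp (4 * (t / Real.sqrt 2)) - 1) ≤ h t := by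
    intro t ht
    have := hmono ht
    simp only [hH_def, hG_def] at this
    have h0 : Real.exp (4 * ((0:ℝ) / Real.sqrt 2)) = 1 := by norm_num
    rw [h0] at this
    nlinarith
  -- choose t
  have hC0 : 0 ≤ C := le_trans (abs_nonneg _) (hbdd 0)
  set X : ℝ := 1 + 32 * (C + |h 0| + 1) / c with hX_def
  have hd0 : 0 < 32 * (C + |h 0| + 1) / c :=
    div_pos (by nlinarith [abs_nonneg (h 0)]) hc
  have hX1 : 1 ≤ X := by rw [hX_def]; linarith
  have hX0 : 0 < X := by linarith
  set t0 : ℝ := Real.sqrt 2 * Real.log X / 2 with ht0_def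
  have ht0 : 0 ≤ t0 := by
    have := Real.log_nonneg hX1
    have := sqrt2_pos
    positivity
  have hx0 : t0 / Real.sqrt 2 = Real.log X / 2 := by
    rw [ht0_def]; field_simp
  have hexp2 : Real.exp (2 * (t0 / Real.sqrt 2)) = X := by
    rw [hx0]
    rw [show 2 * (Real.log X / 2) = Real.log X by ring]
    exact Real.exp_log hX0
  have hexp4 : Real.exp (4 * (t0 / Real.sqrt 2)) = X ^ 2 := by
    rw [hx0, show 4 * (Real.log X / 2) = Real.log X + Real.log X by ring, Real.exp_add,
      Real.exp_log hX0, sq]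
  -- lower bound on ω t0
  have hωt : ω t0 = h t0 * Pf t0 :=
    (div_mul_cancel₀ (ω t0) (P_pos t0).ne').symm
  have hE1 : 1 ≤ Real.exp (4 * (t0 / Real.sqrt 2)) := by
    rw [hexp4]; nlinarith
  have hPl := P_ge t0 ht0
  have hPu := P_le_one t0
  have hPp := P_pos t0
  have hexpneg : Real.exp (-(2 * (t0 / Real.sqrt 2))) = X⁻¹ := by
    rw [Real.exp_neg, hexp2]
  have hterm1 : -|h 0| ≤ Pf t0 * h 0 := by
    nlinarith [neg_abs_le (h 0), abs_nonneg (h 0)]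
  have hterm2 : c / 32 * (X - X⁻¹) ≤ Pf t0 * (c * (Real.sqrt 2 / 32) * (Real.exp (4 * (t0 / Real.sqrt 2)) - 1)) := by
    have hco : 0 ≤ c * (Real.sqrt 2 / 32) * (Real.exp (4 * (t0 / Real.sqrt 2)) - 1) := by
      exact mul_nonneg (mul_nonneg hc.le (by positivity)) (by linarith)
    have step : Real.exp (-(2 * (t0 / Real.sqrt 2))) / Real.sqrt 2 *
        (c * (Real.sqrt 2 / 32) * (Real.exp (4 * (t0 / Real.sqrt 2)) - 1)) ≤
        Pf t0 * (c * (Real.sqrt 2 / 32) * (Real.exp (4 * (t0 / Real.sqrt 2)) - 1)) := by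
      exact mul_le_mul_of_nonneg_right hPl hco
    refine le_trans (le_of_eq ?_) step
    rw [hexpneg, hexp4]
    have hs := sqrt2_pos
    have hXne : X ≠ 0 := hX0.ne'
    field_simp
  have hXinv : X⁻¹ ≤ 1 := by
    rw [inv_le_one_iff₀]; right; exact hX1
  have hlow : -|h 0| + c / 32 * (X - 1) ≤ ω t0 := by
    have hg' := hgrow t0 ht0
    have : (h 0 + c * (Real.sqrt 2 / 32) * (Real.exp (4 * (t0 / Real.sqrt 2)) - 1)) * Pf t0 ≤ h t0 * Pf t0 :=
      mul_le_mul_of_nonneg_right hg' hPp.le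
    rw [hωt]
    have hXX : c / 32 * (X - 1) ≤ c / 32 * (X - X⁻¹) := by
      gcongr <;> nlinarith
    nlinarith
  have hfin : c / 32 * (X - 1) = C + |h 0| + 1 := by
    rw [hX_def]
    field_simp
    ring
  have := hbdd t0
  have habs : ω t0 ≤ C := le_trans (le_abs_self _) this
  rw [hfin] at hlow
  linarith

/-- Any bounded solution of the linearized equation `-ω'' + W''(u₁)·ω = 0` on `ℝ`
is a scalar multiple of `u₁'`, where `u₁(t) = tanh(t/√2)` and `W''(s) = 3s² - 1`. -/
theorem stmt_12 (u₁ : ℝ → ℝ) (hu : ∀ t, u₁ t = Real.tanh (t / Real.sqrt 2))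
    (ω : ℝ → ℝ) (hsmooth : ContDiff ℝ 2 ω)
    (hbdd : ∃ C, ∀ t, |ω t| ≤ C)
    (heq : ∀ t, -(deriv (deriv ω) t) + (3 * (u₁ t) ^ 2 - 1) * ω t = 0) :
    ∃ a : ℝ, ∀ t, ω t = a * deriv u₁ t := by
  obtain ⟨C, hC⟩ := hbdd
  have hu1 : u₁ = Tf := funext fun t => hu t
  have hd1 : Differentiable ℝ ω := hsmooth.differentiable (by norm_num)
  have hd2 : Differentiable ℝ (deriv ω) := by
    have h2 : ContDiff ℝ ((1 : ℕ) + 1) ω := by exact_mod_cast hsmooth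
    exact (contDiff_succ_iff_deriv.mp h2).2.2.differentiable (by norm_num)
  have heq' : ∀ t, deriv (deriv ω) t = (3 * Tf t ^ 2 - 1) * ω t := by
    intro t
    have := heq t
    rw [hu1] at this
    linarith
  set g : ℝ → ℝ := fun t => deriv ω t * Pf t - ω t * Qf t with hg_def
  have hgderiv : ∀ t, HasDerivAt g 0 t := by
    intro t
    have h1 := ((hd2 t).hasDerivAt.mul (hP t)).sub ((hd1 t).hasDerivAt.mul (hQ t))
    refine h1.congr_deriv ?_
    rw [heq' t, Qf, Pf]
    ring
  have hgconst : ∀ t, g t = g 0 :=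
    fun t => is_const_of_deriv_eq_zero (fun s => (hgderiv s).differentiableAt)
      (fun s => (hgderiv s).deriv) t 0
  have hderivu : ∀ t, deriv u₁ t = Pf t := by
    intro t; rw [hu1]; exact (hT t).deriv
  rcases lt_trichotomy (g 0) 0 with hneg | hzero | hpos
  · -- apply key to -ω
    exfalso
    have hdneg : Differentiable ℝ (fun t => -ω t) := hd1.neg
    have hbneg : ∀ t, |(fun t => -ω t) t| ≤ C := by
      intro t; simpa [abs_neg] using hC t
    refine key (fun t => -ω t) hdneg C hbneg (-(g 0)) (by linarith) ?_
    intro t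
    have hdn : deriv (fun t => -ω t) t = -deriv ω t := deriv.neg
    rw [hdn]
    have := hgconst t
    rw [hg_def] at this
    simp only at this
    simp only [hg_def]
    linarith [this]
  · -- g ≡ 0 : ω is a multiple of Pf
    have hzero' : ∀ t, g t = 0 := fun t => (hgconst t).trans hzero
    have hh : ∀ t, HasDerivAt (fun s => ω s / Pf s) 0 t := by
      intro t
      have := (hd1 t).hasDerivAt.div (hP t) (P_pos t).ne'
      have h0 : (deriv ω t * Pf t - ω t * Qf t) / Pf t ^ 2 = 0 := by
        have := hzero' t
        rw [hg_def] at this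
        simp only at this
        rw [this, zero_div]
      rwa [h0] at this
    have hconst : ∀ t, ω t / Pf t = ω 0 / Pf 0 :=
      fun t => is_const_of_deriv_eq_zero (fun s => (hh s).differentiableAt)
        (fun s => (hh s).deriv) t 0
    refine ⟨ω 0 / Pf 0, fun t => ?_⟩
    rw [hderivu t]
    have := hconst t
    rw [div_eq_div_iff (P_pos t).ne' (P_pos 0).ne'] at this
    rw [div_mul_eq_mul_div, eq_div_iff (P_pos 0).ne']
    linarith [this]
  · exfalso
    refine key ω hd1 C hC (g 0) hpos ?_
    intro t
    have := hgconst t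
    rw [hg_def] at this
    simpa using this
end

section
/- Let u₁(t) = tanh(t/√2), ε > 0, u̇_ε(t) := u₁'(t/ε), and let H : ℝ → ℝ satisfy H(t) = H₀ + a·t + R(t) with |R(t)| ≤ K t² for |t| ≤ 1 and H bounded. Then |∫_ℝ H(t)·u̇_ε(t)² dt - H₀·ε·c| ≤ C·ε³ for some constant C depending on a, K, ‖H‖_∞, where c = ∫_ℝ (u₁')² ds. -/
open MeasureTheory Real

lemma aux_hasDerivAt_tanh (x : ℝ) : HasDerivAt Real.tanh (1 / Real.cosh x ^ 2) x := by
  have h := (Real.hasDerivAt_sinh x).div (Real.hasDerivAt_cosh x) (Real.cosh_pos x).ne'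
  have : (fun y => Real.sinh y / Real.cosh y) = Real.tanh := by
    funext y; rw [Real.tanh_eq_sinh_div_cosh]
  rw [show (Real.sinh / Real.cosh) = Real.tanh from by funext y; rw [Pi.div_apply, Real.tanh_eq_sinh_div_cosh]] at h
  have := Real.cosh_sq_sub_sinh_sq x
  rw [show Real.cosh x * Real.cosh x - Real.sinh x * Real.sinh x = 1 by nlinarith [Real.cosh_pos x]] at h
  exact h

lemma aux_deriv_u (u₁ : ℝ → ℝ) (hu : ∀ t, u₁ t = Real.tanh (t / Real.sqrt 2)) (s : ℝ) :
    deriv u₁ s = 1 / Real.cosh (s / Real.sqrt 2) ^ 2 * (Real.sqrt 2)⁻¹ := by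
  have hfun : u₁ = fun t => Real.tanh (t / Real.sqrt 2) := funext hu
  have h2 : HasDerivAt (fun t : ℝ => t / Real.sqrt 2) ((Real.sqrt 2)⁻¹) s := by
    simpa [div_eq_mul_inv] using (hasDerivAt_id s).div_const (Real.sqrt 2)
  have h := (aux_hasDerivAt_tanh (s / Real.sqrt 2)).comp s h2
  rw [hfun]
  exact h.deriv

lemma aux_inv_cosh_le (x : ℝ) : 1 / Real.cosh x ≤ 2 * Real.exp (-|x|) := by
  have h : Real.exp |x| / 2 ≤ Real.cosh x := by
    rw [← Real.cosh_abs, Real.cosh_eq]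
    have := Real.exp_pos (-|x|)
    linarith
  rw [div_le_iff₀ (Real.cosh_pos x)]
  have hprod : Real.exp (-|x|) * Real.exp |x| = 1 := by
    rw [← Real.exp_add]; simp
  nlinarith [Real.exp_pos (-|x|)]

lemma aux_integrable_exp_neg_abs : Integrable (fun x : ℝ => Real.exp (-|x|)) := by
  have h1 : IntegrableOn (fun x : ℝ => Real.exp (-|x|)) (Set.Ioi 0) := by
    have := exp_neg_integrableOn_Ioi 0 (one_pos)
    refine this.congr_fun ?_ measurableSet_Ioi
    intro x hx; simp [abs_of_pos (Set.mem_Ioi.mp hx)]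
  have h2 : IntegrableOn (fun x : ℝ => Real.exp (-|x|)) (Set.Iic 0) := by
    have := integrableOn_exp_Iic (0:ℝ)
    refine this.congr_fun ?_ measurableSet_Iic
    intro x hx; simp [abs_of_nonpos (Set.mem_Iic.mp hx)]
  have := h2.union h1
  rwa [Set.Iic_union_Ioi, integrableOn_univ] at this

lemma aux_g_bound (u₁ : ℝ → ℝ) (hu : ∀ t, u₁ t = Real.tanh (t / Real.sqrt 2)) (s : ℝ) :
    deriv u₁ s ^ 2 ≤ 8 * Real.exp (-|s|) ∧ s ^ 2 * deriv u₁ s ^ 2 ≤ 32 * Real.exp (-|s|) := by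
  set x := s / Real.sqrt 2 with hx
  have hs2 : (0:ℝ) < Real.sqrt 2 := by positivity
  have habs : |x| = |s| / Real.sqrt 2 := by rw [hx, abs_div, abs_of_pos hs2]
  have hy : 1 / Real.cosh x ≤ 2 * Real.exp (-|x|) := aux_inv_cosh_le x
  have hy0 : 0 < 1 / Real.cosh x := by positivity
  have hd := aux_deriv_u u₁ hu s
  have hgval : deriv u₁ s ^ 2 = (1 / Real.cosh x) ^ 4 * (1/2) := by
    rw [hd]
    have : (Real.sqrt 2)⁻¹ ^ 2 = 1 / 2 := by
      rw [inv_pow, Real.sq_sqrt (by norm_num : (2:ℝ) ≥ 0), one_div]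
    rw [mul_pow, this]
    ring
  have hE : Real.exp (-|x|) ^ 4 = Real.exp (-(4 * |x|)) := by
    rw [← Real.exp_nat_mul]; ring_nf
  have hexp_le : Real.exp (-(4 * |x|)) ≤ Real.exp (-(2 * |s|)) := by
    apply Real.exp_le_exp.mpr
    rw [habs]
    have h2 : Real.sqrt 2 ≤ 2 := by
      nlinarith [Real.sq_sqrt (by norm_num : (2:ℝ) ≥ 0), Real.sqrt_nonneg 2]
    rw [neg_le_neg_iff, div_eq_mul_inv, ← mul_assoc]
    have : 2 * |s| * Real.sqrt 2 ≤ 4 * |s| := by nlinarith [abs_nonneg s]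
    calc 2 * |s| = 2 * |s| * Real.sqrt 2 * (Real.sqrt 2)⁻¹ := by
            field_simp
      _ ≤ 4 * |s| * (Real.sqrt 2)⁻¹ := by
            apply mul_le_mul_of_nonneg_right this (by positivity)
  have hg8 : deriv u₁ s ^ 2 ≤ 8 * Real.exp (-(2 * |s|)) := by
    rw [hgval]
    have h4 : (1 / Real.cosh x) ^ 4 ≤ (2 * Real.exp (-|x|)) ^ 4 :=
      pow_le_pow_left₀ hy0.le hy 4
    have : (2 * Real.exp (-|x|)) ^ 4 = 16 * Real.exp (-(4 * |x|)) := by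
      rw [mul_pow, hE]; norm_num
    nlinarith [hexp_le]
  have hsq : s ^ 2 ≤ 4 * Real.exp |s| := by
    have h1 : |s| / 2 + 1 ≤ Real.exp (|s| / 2) := by
      have := Real.add_one_le_exp (|s| / 2); linarith
    have h2 : (|s| / 2) ^ 2 ≤ Real.exp (|s| / 2) ^ 2 := by
      apply pow_le_pow_left₀ (by positivity) (by linarith [abs_nonneg s]) 2
    have h3 : Real.exp (|s| / 2) ^ 2 = Real.exp |s| := by
      rw [← Real.exp_nat_mul]; ring_nf
    have h4 : (|s| / 2) ^ 2 = s ^ 2 / 4 := by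
      rw [div_pow, sq_abs]; norm_num
    rw [h4, h3] at h2; linarith
  constructor
  · refine hg8.trans ?_
    have : Real.exp (-(2 * |s|)) ≤ Real.exp (-|s|) := by
      apply Real.exp_le_exp.mpr; simp [abs_nonneg s]; linarith [abs_nonneg s]
    linarith
  · have hEE : Real.exp |s| * Real.exp (-(2 * |s|)) = Real.exp (-|s|) := by
      rw [← Real.exp_add]; ring_nf
    calc s ^ 2 * deriv u₁ s ^ 2 ≤ (4 * Real.exp |s|) * (8 * Real.exp (-(2 * |s|))) := by
          apply mul_le_mul hsq hg8 (by positivity) (by positivity)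
      _ = 32 * Real.exp (-|s|) := by rw [mul_mul_mul_comm]; rw [hEE]; ring

/-- Expansion of the projected error term: if `H(t) = H₀ + a·t + R(t)` with `|R(t)| ≤ K t²`
for `|t| ≤ 1` and `H` bounded by `B`, then `|∫ H·u̇_ε² - H₀·ε·c| ≤ C·ε³`,
where `u̇_ε(t) = u₁'(t/ε)`, `c = ∫ (u₁')²`, and `C` depends only on `a, K, B`. -/
theorem stmt_14 (u₁ : ℝ → ℝ) (hu : ∀ t, u₁ t = Real.tanh (t / Real.sqrt 2))
    (H : ℝ → ℝ) (hHmeas : Measurable H) (H₀ a K B : ℝ)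
    (hB : ∀ t, |H t| ≤ B)
    (hR : ∀ t : ℝ, |t| ≤ 1 → |H t - (H₀ + a * t)| ≤ K * t ^ 2)
    (c : ℝ) (hc : c = ∫ s : ℝ, (deriv u₁ s) ^ 2) :
    ∃ C : ℝ, 0 < C ∧ ∀ ε : ℝ, 0 < ε →
      |(∫ t : ℝ, H t * (deriv u₁ (t / ε)) ^ 2) - H₀ * ε * c| ≤ C * ε ^ 3 := by
  have hg0 : ∀ s, (0:ℝ) ≤ deriv u₁ s ^ 2 := fun s => sq_nonneg _
  have hgcont : Continuous fun s => deriv u₁ s ^ 2 := by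
    have hcc : Continuous fun s : ℝ =>
        1 / Real.cosh (s / Real.sqrt 2) ^ 2 * (Real.sqrt 2)⁻¹ := by
      apply Continuous.mul _ continuous_const
      exact Continuous.div continuous_const (by fun_prop) (fun x => by positivity)
    exact (hcc.congr fun s => (aux_deriv_u u₁ hu s).symm).pow 2
  have hb1 : ∀ s, deriv u₁ s ^ 2 ≤ 8 * Real.exp (-|s|) := fun s => (aux_g_bound u₁ hu s).1
  have hb2 : ∀ s, s ^ 2 * deriv u₁ s ^ 2 ≤ 32 * Real.exp (-|s|) :=
    fun s => (aux_g_bound u₁ hu s).2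
  have base := aux_integrable_exp_neg_abs
  have hIg : Integrable fun s : ℝ => deriv u₁ s ^ 2 := by
    refine (base.const_mul 8).mono' hgcont.aestronglyMeasurable ?_
    filter_upwards with s
    rw [Real.norm_eq_abs, abs_of_nonneg (hg0 s)]; exact hb1 s
  have hIg2 : Integrable fun s : ℝ => s ^ 2 * deriv u₁ s ^ 2 := by
    refine (base.const_mul 32).mono'
      ((continuous_pow 2).mul hgcont).aestronglyMeasurable ?_
    filter_upwards with s
    rw [Real.norm_eq_abs, abs_of_nonneg (mul_nonneg (sq_nonneg s) (hg0 s))]; exact hb2 s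
  have hIg1 : Integrable fun s : ℝ => s * deriv u₁ s ^ 2 := by
    refine (base.const_mul 40).mono'
      (continuous_id.mul hgcont).aestronglyMeasurable ?_
    filter_upwards with s
    rw [Real.norm_eq_abs, abs_mul, abs_of_nonneg (hg0 s)]
    have habs : |s| ≤ 1 + s ^ 2 := by nlinarith [sq_abs s, sq_nonneg (|s| - 1)]
    have h1 : |s| * deriv u₁ s ^ 2 ≤ (1 + s ^ 2) * deriv u₁ s ^ 2 :=
      mul_le_mul_of_nonneg_right habs (hg0 s)
    have h2 : (1 + s ^ 2) * deriv u₁ s ^ 2 = deriv u₁ s ^ 2 + s ^ 2 * deriv u₁ s ^ 2 := by ring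
    have := hb1 s; have := hb2 s
    linarith
  have hgeven : ∀ s : ℝ, deriv u₁ (-s) ^ 2 = deriv u₁ s ^ 2 := by
    intro s
    rw [aux_deriv_u u₁ hu, aux_deriv_u u₁ hu, neg_div, Real.cosh_neg]
  have hoddint : (∫ s : ℝ, s * deriv u₁ s ^ 2) = 0 := by
    have h := integral_neg_eq_self (fun s : ℝ => s * deriv u₁ s ^ 2) (volume : Measure ℝ)
    simp only [hgeven] at h
    have h2 : (∫ s : ℝ, -s * deriv u₁ s ^ 2) = -∫ s : ℝ, s * deriv u₁ s ^ 2 := by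
      rw [← integral_neg]; congr 1; funext s; ring
    simp only [neg_mul] at h
    rw [show (fun s : ℝ => -(s * deriv u₁ s ^ 2)) = fun s : ℝ => -s * deriv u₁ s ^ 2 from
      by funext s; ring] at h
    rw [h2] at h
    linarith
  have hB0 : (0:ℝ) ≤ B := le_trans (abs_nonneg _) (hB 0)
  have hK0 : (0:ℝ) ≤ K := by
    have := hR 1 (by norm_num)
    have h2 := abs_nonneg (H 1 - (H₀ + a * 1))
    nlinarith
  set M : ℝ := K + B + |H₀| + |a| with hM
  have hM0 : 0 ≤ M := by positivity
  set I₂ : ℝ := ∫ s : ℝ, s ^ 2 * deriv u₁ s ^ 2 with hI₂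
  have hI₂0 : 0 ≤ I₂ := integral_nonneg fun s => mul_nonneg (sq_nonneg s) (hg0 s)
  refine ⟨M * I₂ + 1, by nlinarith, ?_⟩
  intro ε hε
  have hcv : (∫ t : ℝ, H t * deriv u₁ (t / ε) ^ 2)
      = ε * ∫ s : ℝ, H (ε * s) * deriv u₁ s ^ 2 := by
    calc (∫ t : ℝ, H t * deriv u₁ (t / ε) ^ 2)
        = ∫ t : ℝ, (fun s => H (ε * s) * deriv u₁ s ^ 2) (t / ε) := by
          congr 1; funext t; simp only
          rw [show ε * (t / ε) = t from by field_simp]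
      _ = |ε| • ∫ s : ℝ, H (ε * s) * deriv u₁ s ^ 2 := MeasureTheory.Measure.integral_comp_div (fun s => H (ε * s) * deriv u₁ s ^ 2) ε
      _ = ε * ∫ s : ℝ, H (ε * s) * deriv u₁ s ^ 2 := by
          rw [abs_of_pos hε, smul_eq_mul]
  have hIH : Integrable fun s : ℝ => H (ε * s) * deriv u₁ s ^ 2 := by
    refine (hIg.const_mul B).mono'
      (((hHmeas.comp (measurable_const_mul ε)).aestronglyMeasurable).mul
        hgcont.aestronglyMeasurable) ?_
    filter_upwards with s
    rw [Real.norm_eq_abs, abs_mul, abs_of_nonneg (hg0 s)]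
    exact mul_le_mul_of_nonneg_right (hB _) (hg0 s)
  set φ : ℝ → ℝ := fun s => H (ε * s) * deriv u₁ s ^ 2 - H₀ * deriv u₁ s ^ 2
      - (a * ε) * (s * deriv u₁ s ^ 2) with hφ
  have hIφ : Integrable φ := (hIH.sub (hIg.const_mul H₀)).sub (hIg1.const_mul (a * ε))
  have hφbound : ∀ s, |φ s| ≤ M * ε ^ 2 * (s ^ 2 * deriv u₁ s ^ 2) := by
    intro s
    set g := deriv u₁ s ^ 2 with hgdef
    have hg := hg0 s
    by_cases hcase : |ε * s| ≤ 1
    · have h1 := hR (ε * s) hcase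
      have heq : φ s = (H (ε * s) - (H₀ + a * (ε * s))) * g := by rw [hφ]; ring
      rw [heq, abs_mul, abs_of_nonneg hg]
      have h2 : |H (ε * s) - (H₀ + a * (ε * s))| * g ≤ (K * (ε * s) ^ 2) * g :=
        mul_le_mul_of_nonneg_right h1 hg
      refine h2.trans ?_
      have : (K * (ε * s) ^ 2) * g = K * ε ^ 2 * (s ^ 2 * g) := by ring
      rw [this]
      have hKM : K * ε ^ 2 ≤ M * ε ^ 2 := by
        apply mul_le_mul_of_nonneg_right _ (sq_nonneg ε)
        have := abs_nonneg H₀; have := abs_nonneg a; rw [hM]; linarith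
      exact mul_le_mul_of_nonneg_right hKM (mul_nonneg (sq_nonneg s) hg)
    · push_neg at hcase
      have h1 : 1 ≤ ε ^ 2 * s ^ 2 := by
        nlinarith [abs_nonneg (ε * s), sq_abs (ε * s)]
      have hεs : ε * |s| ≤ ε ^ 2 * s ^ 2 := by
        have h2 : ε * |s| = |ε * s| := by rw [abs_mul, abs_of_pos hε]
        nlinarith [abs_nonneg (ε * s), sq_abs (ε * s)]
      have htr : |φ s| ≤ B * g + |H₀| * g + |a| * (ε * |s|) * g := by
        rw [hφ]
        have t1 : |H (ε * s) * g - H₀ * g - a * ε * (s * g)|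
            ≤ |H (ε * s) * g| + |H₀ * g| + |a * ε * (s * g)| := by
          calc |H (ε * s) * g - H₀ * g - a * ε * (s * g)|
              ≤ |H (ε * s) * g - H₀ * g| + |a * ε * (s * g)| := abs_sub _ _
            _ ≤ |H (ε * s) * g| + |H₀ * g| + |a * ε * (s * g)| := by
                have := abs_sub (H (ε * s) * g) (H₀ * g); linarith
        refine t1.trans ?_
        have e1 : |H (ε * s) * g| ≤ B * g := by
          rw [abs_mul, abs_of_nonneg hg]
          exact mul_le_mul_of_nonneg_right (hB _) hg
        have e2 : |H₀ * g| = |H₀| * g := by rw [abs_mul, abs_of_nonneg hg]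
        have e3 : |a * ε * (s * g)| = |a| * (ε * |s|) * g := by
          rw [abs_mul, abs_mul, abs_mul, abs_of_pos hε, abs_of_nonneg hg]; ring
        linarith [e1, e2.le, e3.le, e2.ge, e3.ge]
      refine htr.trans ?_
      have e1 : B * g ≤ B * (ε ^ 2 * s ^ 2 * g) := by
        have := mul_le_mul_of_nonneg_left (mul_le_mul_of_nonneg_right h1 hg) hB0
        simpa using this
      have e2 : |H₀| * g ≤ |H₀| * (ε ^ 2 * s ^ 2 * g) := by
        have := mul_le_mul_of_nonneg_left (mul_le_mul_of_nonneg_right h1 hg) (abs_nonneg H₀)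
        simpa using this
      have e3 : |a| * (ε * |s|) * g ≤ |a| * (ε ^ 2 * s ^ 2 * g) := by
        have := mul_le_mul_of_nonneg_left (mul_le_mul_of_nonneg_right hεs hg) (abs_nonneg a)
        rw [mul_assoc]
        simpa [mul_assoc] using this
      have hMK : 0 ≤ K * (ε ^ 2 * s ^ 2 * g) := by positivity
      have hexp : M * ε ^ 2 * (s ^ 2 * g)
          = K * (ε ^ 2 * s ^ 2 * g) + B * (ε ^ 2 * s ^ 2 * g)
            + |H₀| * (ε ^ 2 * s ^ 2 * g) + |a| * (ε ^ 2 * s ^ 2 * g) := by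
        rw [hM]; ring
      linarith
  have hint_est : |∫ s, φ s| ≤ M * ε ^ 2 * I₂ := by
    have h1 : |∫ s, φ s| ≤ ∫ s, |φ s| := by
      simpa [Real.norm_eq_abs] using norm_integral_le_integral_norm (μ := volume) φ
    have h2 : (∫ s, |φ s|) ≤ ∫ s, M * ε ^ 2 * (s ^ 2 * deriv u₁ s ^ 2) :=
      integral_mono hIφ.abs (hIg2.const_mul _) hφbound
    have h3 : (∫ s : ℝ, M * ε ^ 2 * (s ^ 2 * deriv u₁ s ^ 2)) = M * ε ^ 2 * I₂ := by
      rw [hI₂]; exact integral_const_mul _ _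
    linarith
  have hsplit : (∫ s, φ s) = (∫ s : ℝ, H (ε * s) * deriv u₁ s ^ 2) - H₀ * c := by
    simp only [hφ]
    have i3 : Integrable (fun s : ℝ => H₀ * deriv u₁ s ^ 2) volume := hIg.const_mul H₀
    have i1 : Integrable
        (fun s : ℝ => H (ε * s) * deriv u₁ s ^ 2 - H₀ * deriv u₁ s ^ 2) volume := hIH.sub i3
    have i2 : Integrable (fun s : ℝ => a * ε * (s * deriv u₁ s ^ 2)) volume :=
      hIg1.const_mul (a * ε)
    rw [integral_sub i1 i2, integral_sub hIH i3, integral_const_mul, integral_const_mul,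
      hoddint, hc]
    ring
  rw [hcv]
  have hfin : ε * (∫ s : ℝ, H (ε * s) * deriv u₁ s ^ 2) - H₀ * ε * c = ε * ∫ s, φ s := by
    rw [hsplit]; ring
  rw [hfin, abs_mul, abs_of_pos hε]
  calc ε * |∫ s, φ s| ≤ ε * (M * ε ^ 2 * I₂) :=
        mul_le_mul_of_nonneg_left hint_est hε.le
    _ ≤ (M * I₂ + 1) * ε ^ 3 := by nlinarith [pow_pos hε 3]
end
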